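/- arXiv:2005.06109 — 2 statements merged into one kernel-verified Lean document; each statement's English description precedes it below -/
import Mathlib

section
/- For distinct indices $i, p, q$ and $\lambda \in \mathbb{R}^n$, one has $\sigma_{n-2}(\lambda|i)\sigma_{n-2}(\lambda|pq) - \sigma_{n-1}(\lambda|i)\sigma_{n-3}(\lambda|pq) = \sigma_{n-3}^2(\lambda|ipq)(\lambda_i\lambda_p + \lambda_i\lambda_q - \lambda_p\lambda_q)$. -/
open Finset

/-- The `k`-th elementary symmetric polynomial of the values of `lam` on the index set `s`. -/
noncomputable def esym {n : ℕ} (k : ℕ) (s : Finset (Fin n)) (lam : Fin n → ℝ) : ℝ :=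
  ∑ t ∈ s.powersetCard k, ∏ i ∈ t, lam i

lemma esym_card {n : ℕ} (s : Finset (Fin n)) (lam : Fin n → ℝ) :
    esym s.card s lam = ∏ i ∈ s, lam i := by
  simp [esym, Finset.powersetCard_self]

lemma myPowersetCard_sub_one {α : Type*} [DecidableEq α] (s : Finset α) (hs : s.Nonempty) :
    s.powersetCard (s.card - 1) = s.image s.erase := by
  ext t
  simp only [mem_powersetCard, mem_image]
  constructor
  · rintro ⟨hts, hc⟩
    have h0 : 0 < s.card := card_pos.mpr hs
    have hne : t ≠ s := by intro h; subst h; omega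
    obtain ⟨j, hjs, hjt⟩ := exists_of_ssubset (ssubset_of_subset_of_ne hts hne)
    refine ⟨j, hjs, ?_⟩
    have hsub : t ⊆ s.erase j := subset_erase.mpr ⟨hts, hjt⟩
    have := card_erase_of_mem hjs
    exact (eq_of_subset_of_card_le hsub (by omega)).symm
  · rintro ⟨j, hj, rfl⟩
    exact ⟨erase_subset _ _, card_erase_of_mem hj⟩

lemma esym_card_sub_one {n : ℕ} (s : Finset (Fin n)) (hs : s.Nonempty) (lam : Fin n → ℝ) :
    esym (s.card - 1) s lam = ∑ j ∈ s, ∏ x ∈ s.erase j, lam x := by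
  rw [esym, myPowersetCard_sub_one s hs, sum_image (fun x hx y hy h => s.erase_injOn hx hy h)]

lemma E1_insert {n : ℕ} (a : Fin n) (T : Finset (Fin n)) (ha : a ∉ T) (lam : Fin n → ℝ) :
    ∑ j ∈ insert a T, ∏ x ∈ (insert a T).erase j, lam x
      = (∏ x ∈ T, lam x) + lam a * ∑ j ∈ T, ∏ x ∈ T.erase j, lam x := by
  rw [sum_insert ha, erase_insert ha]
  congr 1
  rw [mul_sum]
  refine sum_congr rfl fun j hj => ?_
  have hja : j ≠ a := fun h => ha (h ▸ hj)
  rw [erase_insert_of_ne hja.symm, prod_insert (fun h => ha (erase_subset _ _ h))]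

theorem stmt0 {n : ℕ} (lam : Fin n → ℝ) (i p q : Fin n)
    (hip : i ≠ p) (hiq : i ≠ q) (hpq : p ≠ q) :
    esym (n-2) (({i} : Finset (Fin n))ᶜ) lam * esym (n-2) (({p, q} : Finset (Fin n))ᶜ) lam
      - esym (n-1) (({i} : Finset (Fin n))ᶜ) lam * esym (n-3) (({p, q} : Finset (Fin n))ᶜ) lam
      = (esym (n-3) (({i, p, q} : Finset (Fin n))ᶜ) lam) ^ 2
          * (lam i * lam p + lam i * lam q - lam p * lam q) := by
  set T : Finset (Fin n) := ({i, p, q} : Finset (Fin n))ᶜ with hT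
  have hcard3 : ({i, p, q} : Finset (Fin n)).card = 3 := by
    rw [card_insert_of_notMem (by simp [hip, hiq]), card_insert_of_notMem (by simp [hpq]),
      card_singleton]
  have hn3 : 3 ≤ n := by
    have := card_le_univ ({i, p, q} : Finset (Fin n))
    simpa [hcard3] using this
  have hiT : i ∉ T := by simp [hT]
  have hpT : p ∉ T := by simp [hT]
  have hqT : q ∉ T := by simp [hT]
  have hcT : T.card = n - 3 := by
    rw [hT, card_compl, hcard3]; simp
  have hSi : (({i} : Finset (Fin n))ᶜ) = insert p (insert q T) := by
    ext x
    simp only [mem_compl, mem_insert, mem_singleton, hT, not_or]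
    constructor
    · intro hx
      by_cases h1 : x = p
      · exact Or.inl h1
      by_cases h2 : x = q
      · exact Or.inr (Or.inl h2)
      exact Or.inr (Or.inr ⟨hx, h1, h2⟩)
    · rintro (rfl | rfl | ⟨h, _, _⟩)
      · exact Ne.symm hip
      · exact Ne.symm hiq
      · exact h
  have hSpq : (({p, q} : Finset (Fin n))ᶜ) = insert i T := by
    ext x
    simp only [mem_compl, mem_insert, mem_singleton, hT, not_or]
    constructor
    · intro hx
      by_cases h1 : x = i
      · exact Or.inl h1
      exact Or.inr ⟨h1, hx.1, hx.2⟩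
    · rintro (rfl | ⟨_, h1, h2⟩)
      · exact ⟨hip, hiq⟩
      · exact ⟨h1, h2⟩
  set P : ℝ := ∏ x ∈ T, lam x with hP
  set Q : ℝ := ∑ j ∈ T, ∏ x ∈ T.erase j, lam x with hQ
  -- cards
  have hqT' : q ∉ T := hqT
  have hpqT : p ∉ insert q T := by simp [hpq, hpT]
  have hcSi : (insert p (insert q T)).card = n - 1 := by
    rw [card_insert_of_notMem hpqT, card_insert_of_notMem hqT, hcT]; omega
  have hcSpq : (insert i T).card = n - 2 := by
    rw [card_insert_of_notMem hiT, hcT]; omega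
  -- esym evaluations
  have e1 : esym (n-1) (({i} : Finset (Fin n))ᶜ) lam = lam p * (lam q * P) := by
    rw [hSi, ← hcSi, esym_card, prod_insert hpqT, prod_insert hqT]
  have e2 : esym (n-2) (({p, q} : Finset (Fin n))ᶜ) lam = lam i * P := by
    rw [hSpq, ← hcSpq, esym_card, prod_insert hiT]
  have e3 : esym (n-3) (({i, p, q} : Finset (Fin n))ᶜ) lam = P := by
    rw [← hT, ← hcT, esym_card]
  have e4 : esym (n-2) (({i} : Finset (Fin n))ᶜ) lam
      = lam q * P + lam p * (P + lam q * Q) := by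
    have hn2 : n - 2 = (insert p (insert q T)).card - 1 := by omega
    rw [hSi, hn2, esym_card_sub_one _ (insert_nonempty _ _), E1_insert p _ hpqT,
      E1_insert q _ hqT, prod_insert hqT]
  have e5 : esym (n-3) (({p, q} : Finset (Fin n))ᶜ) lam = P + lam i * Q := by
    have hn3' : n - 3 = (insert i T).card - 1 := by omega
    rw [hSpq, hn3', esym_card_sub_one _ (insert_nonempty _ _), E1_insert i _ hiT]
  rw [e1, e2, e3, e4, e5]
  ring
end

section
/- For $k \ge 3$, $0 \le s \le k-4$, and $3 \le k \le n$, define $P(s) = \frac{(s+1)(n-s-1)!}{(k-s-1)!(n-k)!} + \frac{(n+1)(s+1)(n-s-2)!}{(k-s-2)!(n-k)!} - \frac{(n-s-2)!}{(k-s-3)!(n-k)!}$ and $Q(s) = \frac{(n-1)(s+2)(n-s-3)!}{(k-s-3)!(n-k)!}$. Then $2P(s+1) - Q(s) \ge 0$. -/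
/-- `zfact m` is `m!` for `m ≥ 0` and `0` for `m < 0`. -/
noncomputable def zfact (m : ℤ) : ℝ := if 0 ≤ m then (Nat.factorial m.toNat : ℝ) else 0

/-- `zfactInv m` is `1/m!` for `m ≥ 0` and `0` for `m < 0`
(the convention `1/m! = 0` for negative `m`). -/
noncomputable def zfactInv (m : ℤ) : ℝ := if 0 ≤ m then ((Nat.factorial m.toNat : ℝ))⁻¹ else 0

/-- `P(s) = (s+1)(n-s-1)!/((k-s-1)!(n-k)!) + (n+1)(s+1)(n-s-2)!/((k-s-2)!(n-k)!)
          - (n-s-2)!/((k-s-3)!(n-k)!)`. -/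
noncomputable def Pcoef (n k s : ℤ) : ℝ :=
  ((s : ℝ) + 1) * zfact (n - s - 1) * zfactInv (k - s - 1) * zfactInv (n - k)
  + ((n : ℝ) + 1) * ((s : ℝ) + 1) * zfact (n - s - 2) * zfactInv (k - s - 2) * zfactInv (n - k)
  - zfact (n - s - 2) * zfactInv (k - s - 3) * zfactInv (n - k)

/-- `Q(s) = (n-1)(s+2)(n-s-3)!/((k-s-3)!(n-k)!)`. -/
noncomputable def Qcoef (n k s : ℤ) : ℝ :=
  ((n : ℝ) - 1) * ((s : ℝ) + 2) * zfact (n - s - 3) * zfactInv (k - s - 3) * zfactInv (n - k)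

lemma aux15 (M T S : ℕ) :
    0 ≤ 2 * ( ((S:ℝ)+2) * ((M+T+2).factorial : ℝ) * (((T+2).factorial : ℝ))⁻¹ * ((M.factorial : ℝ))⁻¹
      + (((M:ℝ)+T+S+4)+1) * ((S:ℝ)+2) * ((M+T+1).factorial : ℝ) * (((T+1).factorial : ℝ))⁻¹ * ((M.factorial : ℝ))⁻¹
      - ((M+T+1).factorial : ℝ) * ((T.factorial : ℝ))⁻¹ * ((M.factorial : ℝ))⁻¹ )
      - (((M:ℝ)+T+S+4)-1) * ((S:ℝ)+2) * ((M+T+1).factorial : ℝ) * (((T+1).factorial : ℝ))⁻¹ * ((M.factorial : ℝ))⁻¹ := by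
  have h1 : ((M+T+2).factorial : ℝ) = ((M:ℝ)+T+2) * ((M+T+1).factorial : ℝ) := by
    have : (M+T+2).factorial = (M+T+2) * (M+T+1).factorial := rfl
    rw [this]; push_cast; ring
  have h2 : ((T+2).factorial : ℝ) = ((T:ℝ)+2) * ((T+1).factorial : ℝ) := by
    have : (T+2).factorial = (T+2) * (T+1).factorial := rfl
    rw [this]; push_cast; ring
  have h3 : ((T+1).factorial : ℝ) = ((T:ℝ)+1) * (T.factorial : ℝ) := by
    have : (T+1).factorial = (T+1) * T.factorial := rfl
    rw [this]; push_cast; ring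
  have pM : (0:ℝ) < M.factorial := by exact_mod_cast M.factorial_pos
  have pT : (0:ℝ) < T.factorial := by exact_mod_cast T.factorial_pos
  have pMT : (0:ℝ) < (M+T+1).factorial := by exact_mod_cast (M+T+1).factorial_pos
  rw [h1, h2, h3]
  have hT2 : ((T:ℝ)+2) ≠ 0 := by positivity
  have hT1 : ((T:ℝ)+1) ≠ 0 := by positivity
  have key : 0 ≤ 2*((S:ℝ)+2)*((M:ℝ)+T+2) + ((S:ℝ)+2)*((T:ℝ)+2)*((M:ℝ)+T+S+7) - 2*((T:ℝ)+1)*((T:ℝ)+2) := by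
    have hMn : (0:ℝ) ≤ (M:ℝ) := by positivity
    have hSn : (0:ℝ) ≤ (S:ℝ) := by positivity
    have hTn : (0:ℝ) ≤ (T:ℝ) := by positivity
    nlinarith [mul_nonneg hSn hTn, mul_nonneg hSn hMn, mul_nonneg hTn hMn,
      mul_nonneg (mul_nonneg hSn hTn) hMn, mul_nonneg (mul_nonneg hSn hTn) hTn,
      mul_nonneg (mul_nonneg hSn hSn) hTn, mul_nonneg (mul_nonneg hTn hTn) hMn,
      mul_nonneg (mul_nonneg hSn hSn) hMn, sq_nonneg ((T:ℝ)), sq_nonneg ((S:ℝ))]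
  have expand : 2 * ( ((S:ℝ)+2) * ((((M:ℝ)+T+2) * ((M+T+1).factorial : ℝ))) * ((((T:ℝ)+2) * (((T:ℝ)+1) * (T.factorial : ℝ))))⁻¹ * ((M.factorial : ℝ))⁻¹
      + (((M:ℝ)+T+S+4)+1) * ((S:ℝ)+2) * ((M+T+1).factorial : ℝ) * ((((T:ℝ)+1) * (T.factorial : ℝ)))⁻¹ * ((M.factorial : ℝ))⁻¹
      - ((M+T+1).factorial : ℝ) * ((T.factorial : ℝ))⁻¹ * ((M.factorial : ℝ))⁻¹ )
      - (((M:ℝ)+T+S+4)-1) * ((S:ℝ)+2) * ((M+T+1).factorial : ℝ) * ((((T:ℝ)+1) * (T.factorial : ℝ)))⁻¹ * ((M.factorial : ℝ))⁻¹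
      = (2*((S:ℝ)+2)*((M:ℝ)+T+2) + ((S:ℝ)+2)*((T:ℝ)+2)*((M:ℝ)+T+S+7) - 2*((T:ℝ)+1)*((T:ℝ)+2))
        * (((M+T+1).factorial : ℝ) * ((T.factorial : ℝ))⁻¹ * ((M.factorial : ℝ))⁻¹ * (((T:ℝ)+1)*((T:ℝ)+2))⁻¹) := by
    field_simp
    ring
  rw [expand]
  positivity

theorem stmt15 (n k s : ℤ) (hk : 3 ≤ k) (hkn : k ≤ n) (hs0 : 0 ≤ s) (hs : s ≤ k - 4) :
    0 ≤ 2 * Pcoef n k (s + 1) - Qcoef n k s := by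
  obtain ⟨M, hM⟩ : ∃ M : ℕ, n - k = M := ⟨(n-k).toNat, by omega⟩
  obtain ⟨T, hT⟩ : ∃ T : ℕ, k - s - 4 = T := ⟨(k-s-4).toNat, by omega⟩
  obtain ⟨S, hS⟩ : ∃ S : ℕ, s = S := ⟨s.toNat, by omega⟩
  subst hS
  have e1 : zfact (n - (S+1) - 1) = ((M+T+2).factorial : ℝ) := by
    rw [zfact, if_pos (by omega : (0:ℤ) ≤ n - (S+1) - 1)]
    have : (n - ((S:ℤ)+1) - 1).toNat = M+T+2 := by omega
    rw [this]
  have e2 : zfact (n - (S+1) - 2) = ((M+T+1).factorial : ℝ) := by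
    rw [zfact, if_pos (by omega : (0:ℤ) ≤ n - (S+1) - 2)]
    have : (n - ((S:ℤ)+1) - 2).toNat = M+T+1 := by omega
    rw [this]
  have e3 : zfact (n - S - 3) = ((M+T+1).factorial : ℝ) := by
    rw [zfact, if_pos (by omega : (0:ℤ) ≤ n - S - 3)]
    have : (n - (S:ℤ) - 3).toNat = M+T+1 := by omega
    rw [this]
  have f1 : zfactInv (k - (S+1) - 1) = (((T+2).factorial : ℝ))⁻¹ := by
    rw [zfactInv, if_pos (by omega : (0:ℤ) ≤ k - (S+1) - 1)]
    have : (k - ((S:ℤ)+1) - 1).toNat = T+2 := by omega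
    rw [this]
  have f2 : zfactInv (k - (S+1) - 2) = (((T+1).factorial : ℝ))⁻¹ := by
    rw [zfactInv, if_pos (by omega : (0:ℤ) ≤ k - (S+1) - 2)]
    have : (k - ((S:ℤ)+1) - 2).toNat = T+1 := by omega
    rw [this]
  have f3 : zfactInv (k - (S+1) - 3) = ((T.factorial : ℝ))⁻¹ := by
    rw [zfactInv, if_pos (by omega : (0:ℤ) ≤ k - (S+1) - 3)]
    have : (k - ((S:ℤ)+1) - 3).toNat = T := by omega
    rw [this]
  have f4 : zfactInv (k - S - 3) = (((T+1).factorial : ℝ))⁻¹ := by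
    rw [zfactInv, if_pos (by omega : (0:ℤ) ≤ k - S - 3)]
    have : (k - (S:ℤ) - 3).toNat = T+1 := by omega
    rw [this]
  have f5 : zfactInv (n - k) = ((M.factorial : ℝ))⁻¹ := by
    rw [zfactInv, if_pos (by omega : (0:ℤ) ≤ n - k)]
    have : (n - k).toNat = M := by omega
    rw [this]
  have hn : (n : ℝ) = (M:ℝ)+T+S+4 := by
    have : n = (M:ℤ)+T+S+4 := by omega
    exact_mod_cast this
  rw [Pcoef, Qcoef, e1, e2, e3, f1, f2, f3, f4, f5, hn]
  have := aux15 M T S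
  push_cast at this ⊢
  nlinarith [this]
end
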